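/- As ε → 0⁺, (1/π)∫₀^{2π} ((1 + 2ε cos θ + ε²)/(1 + ε²))^{-3/2} (cos θ + ε) dθ = -ε - (21/8)ε³ + o(ε³). In particular, for all sufficiently small ε > 0, this integral is strictly less than -ε. -/

import Mathlib

open MeasureTheory Real Filter Asymptotics Metric Set Topology

/-- Partial derivative ∂u/∂x_i. -/
noncomputable def pd {N : ℕ} (u : EuclideanSpace ℝ (Fin N) → ℝ) (i : Fin N)
    (x : EuclideanSpace ℝ (Fin N)) : ℝ :=
  fderiv ℝ u x (EuclideanSpace.single i 1)

/-- Second partial derivative ∂²u/∂x_i∂x_j. -/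
noncomputable def pd2 {N : ℕ} (u : EuclideanSpace ℝ (Fin N) → ℝ) (i j : Fin N)
    (x : EuclideanSpace ℝ (Fin N)) : ℝ :=
  pd (pd u j) i x

/-- The norm of the gradient |Du(x)|. -/
noncomputable def gradNorm {N : ℕ} (u : EuclideanSpace ℝ (Fin N) → ℝ)
    (x : EuclideanSpace ℝ (Fin N)) : ℝ :=
  Real.sqrt (∑ i, (pd u i x) ^ 2)

/-- The Laplacian Δu. -/
noncomputable def lap {N : ℕ} (u : EuclideanSpace ℝ (Fin N) → ℝ)
    (x : EuclideanSpace ℝ (Fin N)) : ℝ :=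
  ∑ i, pd2 u i i x

/-- The infinity-Laplacian Δ_∞ u = |Du|⁻² Σ ∂_i u ∂_j u ∂_ij u. -/
noncomputable def infLap {N : ℕ} (u : EuclideanSpace ℝ (Fin N) → ℝ)
    (x : EuclideanSpace ℝ (Fin N)) : ℝ :=
  (∑ i, ∑ j, pd u i x * pd u j x * pd2 u i j x) / (gradNorm u x) ^ 2

/-- The p-Laplacian Δ_p u = div(|Du|^{p-2} Du). -/
noncomputable def pLap {N : ℕ} (p : ℝ) (u : EuclideanSpace ℝ (Fin N) → ℝ)
    (x : EuclideanSpace ℝ (Fin N)) : ℝ :=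
  ∑ i, pd (fun y => gradNorm u y ^ (p - 2) * pd u i y) i x

/-- The 1-Laplacian Δ_1 u = |Du| div(Du/|Du|). -/
noncomputable def oneLap {N : ℕ} (u : EuclideanSpace ℝ (Fin N) → ℝ)
    (x : EuclideanSpace ℝ (Fin N)) : ℝ :=
  gradNorm u x * ∑ i, pd (fun y => pd u i y / gradNorm u y) i x

/-- The point x + ε(cos θ, sin θ) on the circle ∂B_ε(x). -/
noncomputable def circlePt (x : EuclideanSpace ℝ (Fin 2)) (ε θ : ℝ) :
    EuclideanSpace ℝ (Fin 2) :=
  x + ε • (EuclideanSpace.single 0 (Real.cos θ) + EuclideanSpace.single 1 (Real.sin θ))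

/-- The average of u over the circle ∂B_ε(x). -/
noncomputable def circleAvg (u : EuclideanSpace ℝ (Fin 2) → ℝ)
    (x : EuclideanSpace ℝ (Fin 2)) (ε : ℝ) : ℝ :=
  (2 * Real.pi)⁻¹ * ∫ θ in (0:ℝ)..(2 * Real.pi), u (circlePt x ε θ)

/-- m is a median of u over the circle ∂B_ε(x): the arc-length measures of the
sets where u ≥ m and u ≤ m coincide. -/
def IsCircleMedian (u : EuclideanSpace ℝ (Fin 2) → ℝ)
    (x : EuclideanSpace ℝ (Fin 2)) (ε m : ℝ) : Prop :=
  volume {θ ∈ Set.Ico (0:ℝ) (2 * Real.pi) | m ≤ u (circlePt x ε θ)} =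
  volume {θ ∈ Set.Ico (0:ℝ) (2 * Real.pi) | u (circlePt x ε θ) ≤ m}

open intervalIntegral

/-- MVT step: if `f 0 = 0` and `|f'| ≤ C|t|^n` on `[-1/2,1/2]`, then `|f s| ≤ C|s|^(n+1)`. -/
lemma step_bound {f f' : ℝ → ℝ} (C : ℝ) (hC : 0 ≤ C) (n : ℕ)
    (hf : ∀ t ∈ Set.Icc (-(1:ℝ)/2) (1/2), HasDerivAt f (f' t) t)
    (h0 : f 0 = 0)
    (hb : ∀ t ∈ Set.Icc (-(1:ℝ)/2) (1/2), |f' t| ≤ C * |t| ^ n) :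
    ∀ s ∈ Set.Icc (-(1:ℝ)/2) (1/2), |f s| ≤ C * |s| ^ (n + 1) := by
  intro s hs
  have h0mem : (0:ℝ) ∈ Set.Icc (-(1:ℝ)/2) (1/2) := by norm_num
  have hsub : Set.uIcc (0:ℝ) s ⊆ Set.Icc (-(1:ℝ)/2) (1/2) := Set.uIcc_subset_Icc h0mem hs
  have habs : ∀ t ∈ Set.uIcc (0:ℝ) s, |t| ≤ |s| := by
    intro t ht
    rcases Set.mem_uIcc.mp ht with ⟨h1, h2⟩ | ⟨h1, h2⟩
    · rw [abs_of_nonneg h1]; exact h2.trans (le_abs_self s)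
    · rw [abs_of_nonpos h2]; exact (neg_le_neg h1).trans (neg_le_abs s)
  have key := Convex.norm_image_sub_le_of_norm_hasDerivWithin_le
    (f := f) (f' := f') (s := Set.uIcc (0:ℝ) s) (C := C * |s| ^ n)
    (fun t ht => (hf t (hsub ht)).hasDerivWithinAt)
    (fun t ht => by
      calc ‖f' t‖ ≤ C * |t| ^ n := hb t (hsub ht)
        _ ≤ C * |s| ^ n :=
          mul_le_mul_of_nonneg_left (pow_le_pow_left₀ (abs_nonneg t) (habs t ht) n) hC)
    (convex_uIcc _ _) Set.left_mem_uIcc Set.right_mem_uIcc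
  simp only [h0, sub_zero, Real.norm_eq_abs] at key
  calc |f s| ≤ C * |s| ^ n * |s| := key
    _ = C * |s| ^ (n + 1) := by rw [pow_succ]; ring

lemma hasDeriv_opow (p : ℝ) (t : ℝ) (ht : (0:ℝ) < 1 + t) :
    HasDerivAt (fun s : ℝ => (1 + s) ^ p) (p * (1 + t) ^ (p - 1)) t := by
  have h := (HasDerivAt.const_add (1:ℝ) (hasDerivAt_id t)).rpow_const
    (p := p) (Or.inl (ne_of_gt ht))
  simpa using h

lemma rpow_bound (q : ℝ) (hq : q ≤ 0) (hq6 : -6 ≤ q) (t : ℝ)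
    (ht : t ∈ Set.Icc (-(1:ℝ)/2) (1/2)) : (1 + t) ^ q ≤ 64 := by
  have h1 : (0:ℝ) < 1/2 := by norm_num
  have h2 : (1/2:ℝ) ≤ 1 + t := by linarith [ht.1]
  have h3 : (1 + t) ^ q ≤ (1/2 : ℝ) ^ q := Real.rpow_le_rpow_of_nonpos h1 h2 hq
  have h4 : ((1:ℝ)/2) ^ q ≤ (1/2:ℝ) ^ (-6:ℝ) :=
    Real.rpow_le_rpow_of_exponent_ge h1 (by norm_num) hq6
  have h5 : ((1:ℝ)/2) ^ (-6:ℝ) = 64 := by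
    rw [show (-6:ℝ) = -((6:ℕ):ℝ) by norm_num, Real.rpow_neg (by norm_num),
      Real.rpow_natCast]
    norm_num
  linarith

lemma hasDeriv_part (c p c' p' : ℝ) (h : c' = c * p) (h2 : p' = p - 1) (t : ℝ)
    (ht : (0:ℝ) < 1 + t) :
    HasDerivAt (fun s : ℝ => c * (1 + s) ^ p) (c' * (1 + t) ^ p') t := by
  subst h h2
  have := (hasDeriv_opow p t ht).const_mul c
  convert this using 1
  all_goals try rfl
  ring

noncomputable def r0 (s : ℝ) : ℝ :=
  (1+s)^(-(3/2):ℝ) - (1 - 3/2*s + 15/8*s^2 - 35/16*s^3)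
noncomputable def r1 (s : ℝ) : ℝ :=
  (-(3/2))*(1+s)^(-(5/2):ℝ) - (-(3/2) + 15/4*s - 105/16*s^2)
noncomputable def r2 (s : ℝ) : ℝ :=
  (15/4)*(1+s)^(-(7/2):ℝ) - (15/4 - 105/8*s)
noncomputable def r3 (s : ℝ) : ℝ :=
  (-(105/8))*(1+s)^(-(9/2):ℝ) - (-(105/8))
noncomputable def r4 (s : ℝ) : ℝ :=
  (945/16)*(1+s)^(-(11/2):ℝ)

lemma hd_r3 (t : ℝ) (ht : (0:ℝ) < 1 + t) : HasDerivAt r3 (r4 t) t := by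
  have h := (hasDeriv_part (-(105/8)) (-(9/2)) (945/16) (-(11/2)) (by norm_num)
    (by norm_num) t ht).sub_const (-(105/8) : ℝ)
  exact h

lemma hd_r2 (t : ℝ) (ht : (0:ℝ) < 1 + t) : HasDerivAt r2 (r3 t) t := by
  have hp : HasDerivAt (fun s : ℝ => 15/4 - 105/8*s) (-(105/8) : ℝ) t := by
    have := HasDerivAt.const_sub (15/4:ℝ) ((hasDerivAt_id t).const_mul (105/8:ℝ))
    convert this using 1
    all_goals try rfl
    simp
  exact (hasDeriv_part (15/4) (-(7/2)) (-(105/8)) (-(9/2)) (by norm_num)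
    (by norm_num) t ht).sub hp

lemma hd_r1 (t : ℝ) (ht : (0:ℝ) < 1 + t) : HasDerivAt r1 (r2 t) t := by
  have hp : HasDerivAt (fun s : ℝ => -(3/2) + 15/4*s - 105/16*s^2)
      ((15/4 - 105/8*t) : ℝ) t := by
    have := (((hasDerivAt_id t).const_mul (15/4:ℝ)).const_add (-(3/2):ℝ)).sub
      ((hasDerivAt_pow 2 t).const_mul (105/16:ℝ))
    convert this using 1
    all_goals try rfl
    push_cast; ring
  exact (hasDeriv_part (-(3/2)) (-(5/2)) (15/4) (-(7/2)) (by norm_num)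
    (by norm_num) t ht).sub hp

lemma hd_r0 (t : ℝ) (ht : (0:ℝ) < 1 + t) : HasDerivAt r0 (r1 t) t := by
  have hp : HasDerivAt (fun s : ℝ => 1 - 3/2*s + 15/8*s^2 - 35/16*s^3)
      ((-(3/2) + 15/4*t - 105/16*t^2) : ℝ) t := by
    have := ((HasDerivAt.const_sub (1:ℝ) ((hasDerivAt_id t).const_mul (3/2:ℝ))).add
      ((hasDerivAt_pow 2 t).const_mul (15/8:ℝ))).sub
      ((hasDerivAt_pow 3 t).const_mul (35/16:ℝ))
    convert this using 1
    all_goals try rfl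
    push_cast; ring
  have hq : HasDerivAt (fun s : ℝ => (1+s)^(-(3/2):ℝ)) ((-(3/2))*(1+t)^(-(5/2):ℝ)) t := by
    have h := hasDeriv_opow (-(3/2)) t ht
    have e : (-(3/2):ℝ) - 1 = -(5/2) := by norm_num
    rw [e] at h
    exact h
  exact hq.sub hp

lemma memIcc_pos {t : ℝ} (ht : t ∈ Set.Icc (-(1:ℝ)/2) (1/2)) : (0:ℝ) < 1 + t := by
  have := ht.1; linarith

lemma b3 : ∀ t ∈ Set.Icc (-(1:ℝ)/2) (1/2), |r3 t| ≤ 3780 * |t| ^ 1 := by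
  apply step_bound 3780 (by norm_num) 0 (fun t ht => hd_r3 t (memIcc_pos ht))
  · norm_num [r3, Real.one_rpow]
  · intro t ht
    have h1 : (0:ℝ) < (1+t) ^ (-(11/2):ℝ) := Real.rpow_pos_of_pos (memIcc_pos ht) _
    have h2 : (1+t) ^ (-(11/2):ℝ) ≤ 64 := rpow_bound (-(11/2)) (by norm_num) (by norm_num) t ht
    have : |r4 t| = (945/16) * (1+t) ^ (-(11/2):ℝ) := by
      rw [r4, abs_of_nonneg (by positivity)]
    rw [this, pow_zero, mul_one]
    nlinarith

lemma b2 : ∀ t ∈ Set.Icc (-(1:ℝ)/2) (1/2), |r2 t| ≤ 3780 * |t| ^ 2 :=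
  step_bound 3780 (by norm_num) 1 (fun t ht => hd_r2 t (memIcc_pos ht))
    (by norm_num [r2, Real.one_rpow]) b3

lemma b1 : ∀ t ∈ Set.Icc (-(1:ℝ)/2) (1/2), |r1 t| ≤ 3780 * |t| ^ 3 :=
  step_bound 3780 (by norm_num) 2 (fun t ht => hd_r1 t (memIcc_pos ht))
    (by norm_num [r1, Real.one_rpow]) b2

lemma b0 : ∀ t ∈ Set.Icc (-(1:ℝ)/2) (1/2), |r0 t| ≤ 3780 * |t| ^ 4 :=
  step_bound 3780 (by norm_num) 3 (fun t ht => hd_r0 t (memIcc_pos ht))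
    (by norm_num [r0, Real.one_rpow]) b1

lemma taylor_bound (s : ℝ) (hs : s ∈ Set.Icc (-(1:ℝ)/2) (1/2)) :
    |(1+s)^(-(3/2):ℝ) - (1 - 3/2*s + 15/8*s^2 - 35/16*s^3)| ≤ 3780 * s ^ 4 := by
  have h := b0 s hs
  have h4 : |s| ^ 4 = s ^ 4 := by
    rw [← abs_pow, abs_of_nonneg (by positivity)]
  rw [r0, h4] at h
  exact h
lemma cos1 : ∫ θ in (0:ℝ)..(2*π), cos θ = 0 := by
  simp [integral_cos]

lemma cos2 : ∫ θ in (0:ℝ)..(2*π), cos θ ^ 2 = π := by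
  simp [integral_cos_sq]

lemma cos3 : ∫ θ in (0:ℝ)..(2*π), cos θ ^ 3 = 0 := by
  have h := integral_cos_pow (a := 0) (b := 2*π) (n := 1)
  norm_num at h
  simpa [integral_cos] using h

lemma cos4 : ∫ θ in (0:ℝ)..(2*π), cos θ ^ 4 = 3/4 * π := by
  have h := integral_cos_pow (a := 0) (b := 2*π) (n := 2)
  norm_num [integral_cos_sq] at h
  linarith

lemma poly_integral (k ε : ℝ) :
    ∫ θ in (0:ℝ)..(2*π),
      (1 - 3/2*(k*cos θ) + 15/8*(k*cos θ)^2 - 35/16*(k*cos θ)^3) * (cos θ + ε)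
    = π * (2*ε - 3/2*k + 15/8*k^2*ε - 105/64*k^3) := by
  have hfe : (fun θ : ℝ =>
      (1 - 3/2*(k*cos θ) + 15/8*(k*cos θ)^2 - 35/16*(k*cos θ)^3) * (cos θ + ε))
      = fun θ : ℝ => ε + ((1 - 3/2*k*ε)*cos θ + ((-(3/2)*k + 15/8*k^2*ε)*cos θ^2 +
        ((15/8*k^2 - 35/16*k^3*ε)*cos θ^3 + (-(35/16)*k^3)*cos θ^4))) := by
    funext θ; ring
  have i1 : IntervalIntegrable (fun θ : ℝ => (1 - 3/2*k*ε)*cos θ) MeasureTheory.volume 0 (2*π) :=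
    (Continuous.intervalIntegrable (by continuity) _ _)
  have i2 : IntervalIntegrable (fun θ : ℝ => (-(3/2)*k + 15/8*k^2*ε)*cos θ^2)
      MeasureTheory.volume 0 (2*π) := (Continuous.intervalIntegrable (by continuity) _ _)
  have i3 : IntervalIntegrable (fun θ : ℝ => (15/8*k^2 - 35/16*k^3*ε)*cos θ^3)
      MeasureTheory.volume 0 (2*π) := (Continuous.intervalIntegrable (by continuity) _ _)
  have i4 : IntervalIntegrable (fun θ : ℝ => (-(35/16)*k^3)*cos θ^4)
      MeasureTheory.volume 0 (2*π) := (Continuous.intervalIntegrable (by continuity) _ _)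
  rw [hfe, integral_add (intervalIntegrable_const) (i1.add (i2.add (i3.add i4))),
    integral_add i1 (i2.add (i3.add i4)), integral_add i2 (i3.add i4), integral_add i3 i4,
    intervalIntegral.integral_const_mul, intervalIntegral.integral_const_mul, intervalIntegral.integral_const_mul, intervalIntegral.integral_const_mul,
    cos1, cos2, cos3, cos4, intervalIntegral.integral_const]
  simp
  ring

set_option maxHeartbeats 2000000 in
lemma main_est (ε : ℝ) (h0 : 0 < ε) (h4 : ε ≤ 1/4) :
    |1 / Real.pi * (∫ θ in (0:ℝ)..(2 * Real.pi),
        (((1 + 2 * ε * Real.cos θ + ε ^ 2) / (1 + ε ^ 2)) ^ (-(3/2) : ℝ)) *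
          (Real.cos θ + ε)) - (-ε - (21/8) * ε ^ 3)| ≤ 160000 * ε ^ 4 := by
  have hπ := Real.pi_pos
  have hd : (0:ℝ) < 1 + ε^2 := by positivity
  set k : ℝ := 2*ε/(1+ε^2) with hk
  have hk0 : 0 < k := by positivity
  have hkle : k ≤ 2*ε := by
    rw [hk]; exact div_le_self (by positivity) (by nlinarith)
  have hk2 : k ≤ 1/2 := by linarith
  have habs : ∀ θ:ℝ, |k * cos θ| ≤ 1/2 := by
    intro θ
    rw [abs_mul, abs_of_pos hk0]
    calc k * |cos θ| ≤ k * 1 := by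
          nlinarith [abs_cos_le_one θ, abs_nonneg (cos θ)]
      _ ≤ 1/2 := by linarith
  have hmem : ∀ θ:ℝ, k * cos θ ∈ Set.Icc (-(1:ℝ)/2) (1/2) := by
    intro θ
    have h := abs_le.mp (habs θ)
    exact ⟨by linarith [h.1], h.2⟩
  have hpos : ∀ θ:ℝ, (0:ℝ) < 1 + k * cos θ := fun θ => memIcc_pos (hmem θ)
  have hbase : ∀ θ:ℝ, (1 + 2 * ε * cos θ + ε ^ 2) / (1 + ε ^ 2) = 1 + k * cos θ := by
    intro θ; rw [hk]; field_simp; ring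
  have hfeq : (fun θ:ℝ => (((1 + 2 * ε * Real.cos θ + ε ^ 2) / (1 + ε ^ 2)) ^ (-(3/2) : ℝ)) *
          (Real.cos θ + ε))
      = fun θ:ℝ => ((1 + k * cos θ) ^ (-(3/2):ℝ)) * (cos θ + ε) := by
    funext θ; rw [hbase θ]
  have hc1 : Continuous (fun θ:ℝ => (1 + k * cos θ) ^ (-(3/2):ℝ)) :=
    Continuous.rpow_const (continuous_const.add (continuous_const.mul Real.continuous_cos)) (fun θ => Or.inl (ne_of_gt (hpos θ)))
  have hcf : Continuous (fun θ:ℝ => ((1 + k * cos θ) ^ (-(3/2):ℝ)) * (cos θ + ε)) :=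
    hc1.mul (Real.continuous_cos.add continuous_const)
  have hcP : Continuous (fun θ:ℝ =>
      (1 - 3/2*(k*cos θ) + 15/8*(k*cos θ)^2 - 35/16*(k*cos θ)^3) * (cos θ + ε)) := by
    have hc := Real.continuous_cos
    fun_prop
  have hif := hcf.intervalIntegrable (μ := volume) 0 (2*π)
  have hiP := hcP.intervalIntegrable (μ := volume) 0 (2*π)
  set E : ℝ := ∫ θ in (0:ℝ)..(2*π),
      (((1 + k * cos θ) ^ (-(3/2):ℝ)) * (cos θ + ε)
        - (1 - 3/2*(k*cos θ) + 15/8*(k*cos θ)^2 - 35/16*(k*cos θ)^3) * (cos θ + ε)) with hE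
  have hsub : E = (∫ θ in (0:ℝ)..(2*π), ((1 + k * cos θ) ^ (-(3/2):ℝ)) * (cos θ + ε))
      - ∫ θ in (0:ℝ)..(2*π),
        (1 - 3/2*(k*cos θ) + 15/8*(k*cos θ)^2 - 35/16*(k*cos θ)^3) * (cos θ + ε) := by
    rw [hE]; exact intervalIntegral.integral_sub hif hiP
  have hEb : |E| ≤ 4725 * k^4 * (2*π) := by
    have h := intervalIntegral.norm_integral_le_of_norm_le_const
      (C := 4725 * k^4) (a := (0:ℝ)) (b := 2*π)
      (f := fun θ:ℝ => ((1 + k * cos θ) ^ (-(3/2):ℝ)) * (cos θ + ε)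
        - (1 - 3/2*(k*cos θ) + 15/8*(k*cos θ)^2 - 35/16*(k*cos θ)^3) * (cos θ + ε))
      (by
        intro θ _
        try dsimp only
        rw [Real.norm_eq_abs]
        have h1 := taylor_bound (k * cos θ) (hmem θ)
        have hcc : cos θ^4 ≤ 1 := by
          nlinarith [Real.cos_sq_le_one θ, sq_nonneg (cos θ), sq_nonneg (cos θ^2)]
        have hc4 : (k * cos θ)^4 ≤ k^4 := by
          calc (k*cos θ)^4 = k^4 * cos θ^4 := by ring
            _ ≤ k^4 * 1 := mul_le_mul_of_nonneg_left hcc (pow_pos hk0 4).le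
            _ = k^4 := mul_one _
        have h2 : |cos θ + ε| ≤ 5/4 := by
          have := abs_cos_le_one θ
          have := abs_le.mp this
          rw [abs_le]; constructor <;> linarith [this.1, this.2]
        have heq : ((1 + k * cos θ) ^ (-(3/2):ℝ)) * (cos θ + ε)
            - (1 - 3/2*(k*cos θ) + 15/8*(k*cos θ)^2 - 35/16*(k*cos θ)^3) * (cos θ + ε)
            = ((1 + k * cos θ) ^ (-(3/2):ℝ)
              - (1 - 3/2*(k*cos θ) + 15/8*(k*cos θ)^2 - 35/16*(k*cos θ)^3)) * (cos θ + ε) := by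
          ring
        rw [heq, abs_mul]
        calc |(1 + k * cos θ) ^ (-(3/2):ℝ)
              - (1 - 3/2*(k*cos θ) + 15/8*(k*cos θ)^2 - 35/16*(k*cos θ)^3)| * |cos θ + ε|
            ≤ (3780 * k^4) * (5/4) := by
              apply mul_le_mul (h1.trans (by nlinarith)) h2 (abs_nonneg _) (by positivity)
          _ = 4725 * k^4 := by ring)
    rw [hE]
    calc |∫ θ in (0:ℝ)..(2*π), _| ≤ 4725 * k^4 * |2*π - 0| := h
      _ = 4725 * k^4 * (2*π) := by rw [sub_zero, abs_of_pos (by positivity)]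
  have hP := poly_integral k ε
  have hQ : (∫ θ in (0:ℝ)..(2*π), ((1 + k * cos θ) ^ (-(3/2):ℝ)) * (cos θ + ε))
      = π * (2*ε - 3/2*k + 15/8*k^2*ε - 105/64*k^3) + E := by
    rw [hsub, hP]; ring
  rw [hfeq, hQ]
  have hπne : Real.pi ≠ 0 := ne_of_gt hπ
  have hid : 1 / Real.pi * (π * (2*ε - 3/2*k + 15/8*k^2*ε - 105/64*k^3) + E)
      - (-ε - (21/8) * ε ^ 3)
      = ((2*ε - 3/2*k + 15/8*k^2*ε - 105/64*k^3) + ε + 21/8*ε^3) + 1/π * E := by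
    field_simp
    ring
  rw [hid]
  have hF : (2*ε - 3/2*k + 15/8*k^2*ε - 105/64*k^3) + ε + 21/8*ε^3
      = ε^5*(171 + 87*ε^2 + 21*ε^4)/(8*(1+ε^2)^3) := by
    rw [hk]; field_simp; ring
  have hFb : |(2*ε - 3/2*k + 15/8*k^2*ε - 105/64*k^3) + ε + 21/8*ε^3| ≤ 6 * ε^4 := by
    rw [hF, abs_of_nonneg (by positivity)]
    have hD8 : (8:ℝ) ≤ 8*(1+ε^2)^3 := by nlinarith [pow_pos hd 3, sq_nonneg ε, sq_nonneg (ε^2), pow_pos hd 2]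
    have hNn : 0 ≤ ε^5*(171 + 87*ε^2 + 21*ε^4) := by positivity
    calc ε^5*(171 + 87*ε^2 + 21*ε^4)/(8*(1+ε^2)^3) ≤ ε^5*(171 + 87*ε^2 + 21*ε^4)/8 :=
          div_le_div_of_nonneg_left hNn (by norm_num) hD8
      _ ≤ 6 * ε^4 := by
          rw [div_le_iff₀ (by norm_num : (0:ℝ) < 8)]
          have b1 : ε^2 ≤ 1/16 := by nlinarith
          have b4 : ε^4 ≤ 1/256 := by nlinarith [sq_nonneg ε, b1]
          have b5 : ε^5 ≤ ε^4/4 := by nlinarith [pow_pos h0 4]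
          nlinarith [pow_pos h0 4, pow_pos h0 5,
            mul_le_mul_of_nonneg_left b1 (pow_pos h0 5).le,
            mul_le_mul_of_nonneg_left b4 (pow_pos h0 5).le]
  have hk4 : k^4 ≤ 16 * ε^4 := by
    have := pow_le_pow_left₀ hk0.le hkle 4
    nlinarith
  have hEπ : |1/π * E| ≤ 151200 * ε^4 := by
    rw [abs_mul, abs_of_pos (by positivity : (0:ℝ) < 1/π)]
    calc 1/π * |E| ≤ 1/π * (4725 * k^4 * (2*π)) := by
          apply mul_le_mul_of_nonneg_left hEb (by positivity)
      _ = 9450 * k^4 := by field_simp; ring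
      _ ≤ 151200 * ε^4 := by nlinarith
  calc |((2*ε - 3/2*k + 15/8*k^2*ε - 105/64*k^3) + ε + 21/8*ε^3) + 1/π * E|
      ≤ |(2*ε - 3/2*k + 15/8*k^2*ε - 105/64*k^3) + ε + 21/8*ε^3| + |1/π * E| := abs_add_le _ _
    _ ≤ 6 * ε^4 + 151200 * ε^4 := add_le_add hFb hEπ
    _ ≤ 160000 * ε^4 := by nlinarith [pow_pos h0 4]


/-- asymptotic expansion of the derivative integral, and the strict
inequality for small ε. -/
theorem integral_expansion :
    ((fun ε : ℝ =>
        (1 / Real.pi) * (∫ θ in (0:ℝ)..(2 * Real.pi),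
          (((1 + 2 * ε * Real.cos θ + ε ^ 2) / (1 + ε ^ 2)) ^ (-(3/2) : ℝ)) *
            (Real.cos θ + ε))
        - (-ε - (21/8) * ε ^ 3))
      =o[𝓝[>] (0:ℝ)] fun ε => ε ^ 3) ∧
    ∀ᶠ ε in 𝓝[>] (0:ℝ),
      (1 / Real.pi) * (∫ θ in (0:ℝ)..(2 * Real.pi),
        (((1 + 2 * ε * Real.cos θ + ε ^ 2) / (1 + ε ^ 2)) ^ (-(3/2) : ℝ)) *
          (Real.cos θ + ε)) < -ε := by
  constructor
  · rw [Asymptotics.isLittleO_iff]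
    intro c hc
    have hδ : (0:ℝ) < min (1/4) (c/160000) := by positivity
    filter_upwards [Ioo_mem_nhdsGT_of_mem
      (Set.mem_Ico.mpr ⟨le_refl (0:ℝ), hδ⟩)] with ε hε
    obtain ⟨hε0, hεδ⟩ := hε
    have h4 : ε ≤ 1/4 := le_of_lt (lt_of_lt_of_le hεδ (min_le_left _ _))
    have hc' : ε < c/160000 := lt_of_lt_of_le hεδ (min_le_right _ _)
    have hme := main_est ε hε0 h4
    rw [Real.norm_eq_abs, Real.norm_eq_abs]
    have h3 : (0:ℝ) < ε^3 := pow_pos hε0 3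
    calc |(1 / Real.pi) * (∫ θ in (0:ℝ)..(2 * Real.pi),
          (((1 + 2 * ε * Real.cos θ + ε ^ 2) / (1 + ε ^ 2)) ^ (-(3/2) : ℝ)) *
            (Real.cos θ + ε)) - (-ε - (21/8) * ε ^ 3)| ≤ 160000 * ε ^ 4 := hme
      _ ≤ c * ε ^ 3 := by nlinarith
      _ = c * |ε ^ 3| := by rw [abs_of_pos h3]
  · have hδ : (0:ℝ) < min (1/4) (1/100000) := by norm_num
    filter_upwards [Ioo_mem_nhdsGT_of_mem
      (Set.mem_Ico.mpr ⟨le_refl (0:ℝ), hδ⟩)] with ε hε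
    obtain ⟨hε0, hεδ⟩ := hε
    have h4 : ε ≤ 1/4 := le_of_lt (lt_of_lt_of_le hεδ (min_le_left _ _))
    have h5 : ε < 1/100000 := lt_of_lt_of_le hεδ (min_le_right _ _)
    have hme := (abs_le.mp (main_est ε hε0 h4)).2
    have h3 : (0:ℝ) < ε^3 := pow_pos hε0 3
    nlinarith
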